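/- The Jucys–Murphy element J_k = (1 k) + (2 k) + ... + (k-1 k) in the group algebra ℂ[S_n] has the property that any symmetric polynomial evaluated at J_2,...,J_n lies in the center of ℂ[S_n]. -/

import Mathlib

open Equiv Finset

/-- The Jucys–Murphy element `J_k = (1 k) + (2 k) + ⋯ + (k-1 k)` in `ℂ[S_n]`. -/
noncomputable def jucysMurphy (n : ℕ) (k : Fin n) :
    MonoidAlgebra ℂ (Equiv.Perm (Fin n)) :=
  ∑ i ∈ Finset.univ.filter (fun i : Fin n => i < k),
    MonoidAlgebra.of ℂ (Equiv.Perm (Fin n)) (Equiv.swap i k)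

namespace JMAux

variable {n : ℕ}

local notation "og" => MonoidAlgebra.of ℂ (Equiv.Perm (Fin n))

/-- Conjugation moves a Jucys–Murphy element past a permutation that fixes `k`
and preserves `{i | i < k}`. -/
lemma of_mul_jucys (σ : Equiv.Perm (Fin n)) (k : Fin n)
    (hk : σ k = k) (h : ∀ i : Fin n, i < k → σ i < k) :
    og σ * jucysMurphy n k = jucysMurphy n k * og σ := by
  unfold jucysMurphy
  rw [Finset.mul_sum, Finset.sum_mul]
  have key : ∀ i : Fin n,
      og σ * og (Equiv.swap i k) = og (Equiv.swap (σ i) k) * og σ := by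
    intro i
    rw [← map_mul, ← map_mul]
    congr 1
    have h2 : Equiv.swap (σ i) (σ k) = σ * Equiv.swap i k * σ⁻¹ :=
      Equiv.swap_apply_apply σ i k
    rw [hk] at h2
    rw [h2]
    group
  simp_rw [key]
  have himg : (Finset.univ.filter (fun i : Fin n => i < k)).image σ
      = Finset.univ.filter (fun i : Fin n => i < k) := by
    apply Finset.eq_of_subset_of_card_le
    · intro j hj
      obtain ⟨i, hi, rfl⟩ := Finset.mem_image.1 hj
      simp only [Finset.mem_filter, Finset.mem_univ, true_and] at hi ⊢
      exact h i hi
    · rw [Finset.card_image_of_injective _ σ.injective]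
  have hinv : ∀ j : Fin n, j < k → σ⁻¹ j < k := by
    intro j hj
    have hjmem : j ∈ (Finset.univ.filter (fun i : Fin n => i < k)).image σ := by
      rw [himg]; simp [hj]
    obtain ⟨i, hi, hij⟩ := Finset.mem_image.1 hjmem
    simp only [Finset.mem_filter, Finset.mem_univ, true_and] at hi
    have : σ⁻¹ j = i := by rw [← hij]; simp
    rwa [this]
  refine Finset.sum_nbij' (fun i => σ i) (fun j => σ⁻¹ j) ?_ ?_ ?_ ?_ ?_
  · intro a ha
    simp only [Finset.mem_filter, Finset.mem_univ, true_and] at ha ⊢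
    exact h a ha
  · intro a ha
    simp only [Finset.mem_filter, Finset.mem_univ, true_and] at ha ⊢
    exact hinv a ha
  · intro a _; simp
  · intro a _; simp
  · intro a _; rfl

lemma swap_mul_jucys (i k l : Fin n) (hi : i < l) (hk : k < l) :
    og (Equiv.swap i k) * jucysMurphy n l = jucysMurphy n l * og (Equiv.swap i k) := by
  apply of_mul_jucys
  · exact Equiv.swap_apply_of_ne_of_ne hi.ne' hk.ne'
  · intro m hm
    rw [Equiv.swap_apply_def]
    split_ifs <;> assumption

lemma jucys_commute (k l : Fin n) :
    Commute (jucysMurphy n k) (jucysMurphy n l) := by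
  rcases lt_trichotomy k l with h | rfl | h
  · unfold jucysMurphy
    apply Commute.sum_left
    intro i hi
    simp only [Finset.mem_filter, Finset.mem_univ, true_and] at hi
    rw [← jucysMurphy]
    exact (swap_mul_jucys i k l (hi.trans h) h)
  · rfl
  · symm
    conv_rhs => rw [jucysMurphy]
    apply Commute.sum_left
    intro i hi
    simp only [Finset.mem_filter, Finset.mem_univ, true_and] at hi
    rw [← jucysMurphy]
    exact (swap_mul_jucys i l k (hi.trans h) h)

section Pair

variable (c : Fin n) (hc : c.1 + 1 < n)

lemma filter_lt_succ (hc : c.1 + 1 < n) :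
    Finset.univ.filter (fun i : Fin n => i < (⟨c.1 + 1, hc⟩ : Fin n))
      = insert c (Finset.univ.filter (fun i : Fin n => i < c)) := by
  ext j
  simp only [Finset.mem_filter, Finset.mem_univ, true_and, Finset.mem_insert, Fin.lt_def]
  constructor
  · intro hj
    rcases Nat.lt_succ_iff_lt_or_eq.1 hj with h | h
    · exact Or.inr h
    · exact Or.inl (Fin.ext h)
  · rintro (rfl | h)
    · exact Nat.lt_succ_self _
    · exact Nat.lt_succ_of_lt h

lemma c_not_mem : c ∉ Finset.univ.filter (fun i : Fin n => i < c) := by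
  simp

lemma swap_mul_jucys_c (hc : c.1 + 1 < n) :
    og (Equiv.swap c ⟨c.1 + 1, hc⟩) * jucysMurphy n c
      = jucysMurphy n ⟨c.1 + 1, hc⟩ * og (Equiv.swap c ⟨c.1 + 1, hc⟩) - 1 := by
  set c' : Fin n := ⟨c.1 + 1, hc⟩ with hc'
  have hne : c ≠ c' := by
    intro h; have := congrArg Fin.val h; simp [hc'] at this
  have hJc' : jucysMurphy n c' = og (Equiv.swap c c')
      + ∑ i ∈ Finset.univ.filter (fun i : Fin n => i < c), og (Equiv.swap i c') := by
    rw [jucysMurphy, filter_lt_succ c hc, Finset.sum_insert (c_not_mem c)]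
  have key : ∀ i : Fin n, i < c →
      og (Equiv.swap c c') * og (Equiv.swap i c) = og (Equiv.swap i c') * og (Equiv.swap c c') := by
    intro i hi
    rw [← map_mul, ← map_mul]
    congr 1
    have hic : i ≠ c := hi.ne
    have hic' : i ≠ c' := by
      intro h; have := congrArg Fin.val h; have h2 := Fin.lt_def.1 hi; simp [hc'] at this; omega
    have h2 : Equiv.swap (Equiv.swap c c' i) (Equiv.swap c c' c)
        = Equiv.swap c c' * Equiv.swap i c * (Equiv.swap c c')⁻¹ :=
      Equiv.swap_apply_apply _ i c
    rw [Equiv.swap_apply_of_ne_of_ne hic hic', Equiv.swap_apply_left] at h2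
    rw [h2]
    group
  rw [jucysMurphy, Finset.mul_sum]
  have : ∀ i ∈ Finset.univ.filter (fun i : Fin n => i < c),
      og (Equiv.swap c c') * og (Equiv.swap i c)
        = og (Equiv.swap i c') * og (Equiv.swap c c') := by
    intro i hi
    simp only [Finset.mem_filter, Finset.mem_univ, true_and] at hi
    exact key i hi
  rw [Finset.sum_congr rfl this, ← Finset.sum_mul, hJc', add_mul]
  have hss : og (Equiv.swap c c') * og (Equiv.swap c c') = 1 := by
    rw [← map_mul, Equiv.swap_mul_self, map_one]
  rw [hss]
  abel

lemma swap_mul_jucys_c' (hc : c.1 + 1 < n) :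
    og (Equiv.swap c ⟨c.1 + 1, hc⟩) * jucysMurphy n ⟨c.1 + 1, hc⟩
      = jucysMurphy n c * og (Equiv.swap c ⟨c.1 + 1, hc⟩) + 1 := by
  set c' : Fin n := ⟨c.1 + 1, hc⟩ with hc'
  have key : ∀ i : Fin n, i < c →
      og (Equiv.swap c c') * og (Equiv.swap i c') = og (Equiv.swap i c) * og (Equiv.swap c c') := by
    intro i hi
    rw [← map_mul, ← map_mul]
    congr 1
    have hic : i ≠ c := hi.ne
    have hic' : i ≠ c' := by
      intro h; have := congrArg Fin.val h; have h2 := Fin.lt_def.1 hi; simp [hc'] at this; omega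
    have h2 : Equiv.swap (Equiv.swap c c' i) (Equiv.swap c c' c')
        = Equiv.swap c c' * Equiv.swap i c' * (Equiv.swap c c')⁻¹ :=
      Equiv.swap_apply_apply _ i c'
    rw [Equiv.swap_apply_of_ne_of_ne hic hic', Equiv.swap_apply_right] at h2
    rw [h2]
    group
  rw [show jucysMurphy n c' = og (Equiv.swap c c')
      + ∑ i ∈ Finset.univ.filter (fun i : Fin n => i < c), og (Equiv.swap i c') by
    rw [jucysMurphy, filter_lt_succ c hc, Finset.sum_insert (c_not_mem c)]]
  rw [mul_add, Finset.mul_sum]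
  have : ∀ i ∈ Finset.univ.filter (fun i : Fin n => i < c),
      og (Equiv.swap c c') * og (Equiv.swap i c')
        = og (Equiv.swap i c) * og (Equiv.swap c c') := by
    intro i hi
    simp only [Finset.mem_filter, Finset.mem_univ, true_and] at hi
    exact key i hi
  rw [Finset.sum_congr rfl this, ← Finset.sum_mul, ← jucysMurphy]
  have hss : og (Equiv.swap c c') * og (Equiv.swap c c') = 1 := by
    rw [← map_mul, Equiv.swap_mul_self, map_one]
  rw [hss]
  abel

lemma swap_comm_sum (hc : c.1 + 1 < n) :
    og (Equiv.swap c ⟨c.1 + 1, hc⟩) * (jucysMurphy n c + jucysMurphy n ⟨c.1 + 1, hc⟩)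
      = (jucysMurphy n c + jucysMurphy n ⟨c.1 + 1, hc⟩) * og (Equiv.swap c ⟨c.1 + 1, hc⟩) := by
  rw [mul_add, swap_mul_jucys_c c hc, swap_mul_jucys_c' c hc, add_mul]
  abel

lemma swap_comm_prod (hc : c.1 + 1 < n) :
    og (Equiv.swap c ⟨c.1 + 1, hc⟩) * (jucysMurphy n c * jucysMurphy n ⟨c.1 + 1, hc⟩)
      = (jucysMurphy n c * jucysMurphy n ⟨c.1 + 1, hc⟩) * og (Equiv.swap c ⟨c.1 + 1, hc⟩) := by
  set c' : Fin n := ⟨c.1 + 1, hc⟩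
  set s := og (Equiv.swap c c')
  have h1 : s * jucysMurphy n c = jucysMurphy n c' * s - 1 := swap_mul_jucys_c c hc
  have h2 : s * jucysMurphy n c' = jucysMurphy n c * s + 1 := swap_mul_jucys_c' c hc
  have h3 : jucysMurphy n c * jucysMurphy n c' = jucysMurphy n c' * jucysMurphy n c :=
    (jucys_commute c c').eq
  calc s * (jucysMurphy n c * jucysMurphy n c')
      = (jucysMurphy n c' * s - 1) * jucysMurphy n c' := by rw [← mul_assoc, h1]
    _ = jucysMurphy n c' * (s * jucysMurphy n c') - jucysMurphy n c' := by
        rw [sub_mul, one_mul, mul_assoc]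
    _ = jucysMurphy n c' * (jucysMurphy n c * s + 1) - jucysMurphy n c' := by rw [h2]
    _ = jucysMurphy n c' * jucysMurphy n c * s := by
        rw [mul_add, mul_one, add_sub_cancel_right, mul_assoc]
    _ = (jucysMurphy n c * jucysMurphy n c') * s := by rw [← h3]

lemma swap_comm_other (m : Fin n) (hc : c.1 + 1 < n)
    (h1 : m.1 ≠ c.1) (h2 : m.1 ≠ c.1 + 1) :
    og (Equiv.swap c ⟨c.1 + 1, hc⟩) * jucysMurphy n m
      = jucysMurphy n m * og (Equiv.swap c ⟨c.1 + 1, hc⟩) := by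
  set c' : Fin n := ⟨c.1 + 1, hc⟩ with hc'
  apply of_mul_jucys
  · apply Equiv.swap_apply_of_ne_of_ne
    · intro h; exact h1 (congrArg Fin.val h)
    · intro h; exact h2 (congrArg Fin.val h)
  · intro i hi
    rw [Fin.lt_def] at hi ⊢
    rw [Equiv.swap_apply_def]
    split_ifs with ha hb
    · subst ha
      simp only [hc']
      omega
    · subst hb
      simp only [hc'] at hi ⊢
      omega
    · exact hi

end Pair

end JMAux

/-- Evaluation of a multivariate polynomial at the Jucys–Murphy elements
`J_2, …, J_n` (which pairwise commute, so the ordered products below are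
unambiguous). -/
noncomputable def evalAtJucysMurphy (n : ℕ) (p : MvPolynomial (Fin (n - 1)) ℂ) :
    MonoidAlgebra ℂ (Equiv.Perm (Fin n)) :=
  ∑ m ∈ p.support,
    p.coeff m •
      (List.ofFn fun i : Fin (n - 1) =>
        jucysMurphy n ⟨i.1 + 1, by have := i.isLt; omega⟩ ^ m i).prod

namespace JMAux

/-- The Jucys–Murphy elements indexed by `Fin (n-1)`. -/
noncomputable def Jfun (n : ℕ) (i : Fin (n - 1)) : MonoidAlgebra ℂ (Equiv.Perm (Fin n)) :=
  jucysMurphy n ⟨i.1 + 1, by have := i.isLt; omega⟩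

/-- The (commutative) subalgebra generated by the Jucys–Murphy elements. -/
noncomputable def Tsub (n : ℕ) : Subalgebra ℂ (MonoidAlgebra ℂ (Equiv.Perm (Fin n))) :=
  Algebra.adjoin ℂ (Set.range (Jfun n))

noncomputable instance (n : ℕ) : CommRing (Tsub n) :=
  { (inferInstance : Ring (Tsub n)) with
    mul_comm := (Algebra.adjoinCommRingOfComm ℂ (by
    rintro _ ⟨i, rfl⟩ _ ⟨j, rfl⟩
    exact (jucys_commute _ _).eq)).mul_comm }

/-- The Jucys–Murphy elements as elements of `Tsub n`. -/
noncomputable def Jt (n : ℕ) (i : Fin (n - 1)) : Tsub n :=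
  ⟨Jfun n i, Algebra.subset_adjoin ⟨i, rfl⟩⟩

lemma evalJ_eq (n : ℕ) (p : MvPolynomial (Fin (n - 1)) ℂ) :
    evalAtJucysMurphy n p = (Tsub n).val (MvPolynomial.aeval (Jt n) p) := by
  rw [MvPolynomial.aeval_def, MvPolynomial.eval₂_eq', map_sum, evalAtJucysMurphy]
  refine Finset.sum_congr rfl fun m _ => ?_
  rw [map_mul, AlgHom.commutes, ← Algebra.smul_def]
  congr 1
  have hfn : (List.ofFn fun i : Fin (n - 1) =>
      jucysMurphy n ⟨i.1 + 1, by have := i.isLt; omega⟩ ^ m i)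
      = List.map (Tsub n).val (List.ofFn fun i => Jt n i ^ m i) := by
    rw [List.map_ofFn]
    congr 1
  rw [hfn, ← map_list_prod ((Tsub n).val) _, List.prod_ofFn]

lemma mem_center_of_commute_of {n : ℕ} (x : MonoidAlgebra ℂ (Equiv.Perm (Fin n)))
    (h : ∀ g : Equiv.Perm (Fin n),
      MonoidAlgebra.of ℂ (Equiv.Perm (Fin n)) g * x = x * MonoidAlgebra.of ℂ (Equiv.Perm (Fin n)) g) :
    x ∈ Subalgebra.center ℂ (MonoidAlgebra ℂ (Equiv.Perm (Fin n))) := by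
  rw [Subalgebra.mem_center_iff]
  intro b
  induction b using MonoidAlgebra.induction_on with
  | of g => exact h g
  | add f g hf hg => rw [add_mul, mul_add, hf, hg]
  | smul r f hf => rw [smul_mul_assoc, mul_smul_comm, hf]

lemma commute_of_all {n : ℕ} (x : MonoidAlgebra ℂ (Equiv.Perm (Fin n)))
    (h : ∀ (c : Fin n) (hc : c.1 + 1 < n),
      MonoidAlgebra.of ℂ (Equiv.Perm (Fin n)) (Equiv.swap c ⟨c.1 + 1, hc⟩) * x
        = x * MonoidAlgebra.of ℂ (Equiv.Perm (Fin n)) (Equiv.swap c ⟨c.1 + 1, hc⟩)) :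
    ∀ g : Equiv.Perm (Fin n),
      MonoidAlgebra.of ℂ (Equiv.Perm (Fin n)) g * x = x * MonoidAlgebra.of ℂ (Equiv.Perm (Fin n)) g := by
  intro g
  let M : Submonoid (Equiv.Perm (Fin n)) :=
    { carrier := {g | MonoidAlgebra.of ℂ (Equiv.Perm (Fin n)) g * x
        = x * MonoidAlgebra.of ℂ (Equiv.Perm (Fin n)) g}
      one_mem' := by
        show MonoidAlgebra.of ℂ (Equiv.Perm (Fin n)) 1 * x
          = x * MonoidAlgebra.of ℂ (Equiv.Perm (Fin n)) 1
        rw [map_one, one_mul, mul_one]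
      mul_mem' := by
        intro a b ha hb
        simp only [Set.mem_setOf_eq] at ha hb ⊢
        rw [map_mul, mul_assoc, hb, ← mul_assoc, ha, mul_assoc] }
  suffices hM : g ∈ M from hM
  cases n with
  | zero =>
    have : g = 1 := Equiv.ext fun i => i.elim0
    rw [this]; exact M.one_mem
  | succ m =>
    have hgen := Equiv.Perm.mclosure_swap_castSucc_succ m
    have hg : g ∈ Submonoid.closure
        (Set.range fun i : Fin m => Equiv.swap i.castSucc i.succ) := by
      rw [hgen]; exact Submonoid.mem_top g
    refine Submonoid.closure_le.2 ?_ hg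
    rintro _ ⟨i, rfl⟩
    have hic : (i.castSucc : Fin (m + 1)).1 + 1 < m + 1 := by
      simp only [Fin.coe_castSucc]; omega
    have heq : Equiv.swap (i.castSucc) (i.succ)
        = Equiv.swap (i.castSucc) ⟨(i.castSucc : Fin (m+1)).1 + 1, hic⟩ := by
      congr 1
    show MonoidAlgebra.of ℂ (Equiv.Perm (Fin (m+1))) (Equiv.swap i.castSucc i.succ) * x
      = x * MonoidAlgebra.of ℂ (Equiv.Perm (Fin (m+1))) (Equiv.swap i.castSucc i.succ)
    rw [heq]
    exact h i.castSucc hic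

section Esymm

variable {A' : Type*} [CommRing A'] [Algebra ℂ A'] {ι : Type*} [DecidableEq ι]

/-- Elementary symmetric sums of a family of ring elements. -/
def Esum (x : ι → A') (W : Finset ι) (k : ℕ) : A' :=
  ∑ S ∈ W.powersetCard k, ∏ i ∈ S, x i

lemma Esum_zero (x : ι → A') (W : Finset ι) : Esum x W 0 = 1 := by
  simp [Esum]

lemma Esum_insert (x : ι → A') {a : ι} {W : Finset ι} (ha : a ∉ W) (k : ℕ) :
    Esum x (insert a W) (k + 1) = Esum x W (k + 1) + x a * Esum x W k := by
  unfold Esum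
  rw [Finset.powersetCard_succ_insert ha, Finset.sum_union, Finset.sum_image, Finset.mul_sum]
  · congr 1
    refine Finset.sum_congr rfl fun S hS => ?_
    have haS : a ∉ S := fun h => ha ((Finset.mem_powersetCard.1 hS).1 h)
    rw [Finset.prod_insert haS]
  · intro S hS S' hS' hE
    have haS : a ∉ S := fun h => ha ((Finset.mem_powersetCard.1 hS).1 h)
    have haS' : a ∉ S' := fun h => ha ((Finset.mem_powersetCard.1 hS').1 h)
    have := congrArg (fun t => Finset.erase t a) hE
    simpa [Finset.erase_insert haS, Finset.erase_insert haS'] using this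
  · rw [Finset.disjoint_left]
    intro S hS hS'
    obtain ⟨S'', hS'', rfl⟩ := Finset.mem_image.1 hS'
    have : a ∈ insert a S'' := Finset.mem_insert_self a S''
    exact ha ((Finset.mem_powersetCard.1 hS).1 this)

lemma Esum_mem (x : ι → A') (D : Subalgebra ℂ A') {U : Finset ι} {a b : ι}
    (ha : a ∈ U) (hb : b ∈ U) (hab : a ≠ b)
    (hD : ∀ i ∈ U, i ≠ a → i ≠ b → x i ∈ D)
    (hs : x a + x b ∈ D) (hp : x a * x b ∈ D) (k : ℕ) :
    Esum x U k ∈ D := by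
  set V := (U.erase a).erase b with hVdef
  have hbV : b ∉ V := Finset.notMem_erase _ _
  have haV : a ∉ insert b V := by
    simp only [Finset.mem_insert]
    rintro (rfl | hA)
    · exact hab rfl
    · exact (Finset.notMem_erase a U) (Finset.mem_of_mem_erase hA)
  have hU : U = insert a (insert b V) := by
    rw [hVdef, Finset.insert_erase (Finset.mem_erase.2 ⟨hab.symm, hb⟩), Finset.insert_erase ha]
  have hVD : ∀ m : ℕ, Esum x V m ∈ D := by
    intro m
    refine Subalgebra.sum_mem _ fun S hS => Subalgebra.prod_mem _ fun i hi => ?_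
    have hSV : S ⊆ V := (Finset.mem_powersetCard.1 hS).1
    have hiV : i ∈ V := hSV hi
    have hia : i ≠ a := by
      intro h
      exact (Finset.notMem_erase a U) (Finset.mem_of_mem_erase (h ▸ hiV))
    have hib : i ≠ b := by
      intro h
      exact hbV (h ▸ hiV)
    have hiU : i ∈ U := Finset.mem_of_mem_erase (Finset.mem_of_mem_erase hiV)
    exact hD i hiU hia hib
  rw [hU]
  match k with
  | 0 => rw [Esum_zero]; exact one_mem _
  | 1 =>
    have e1 : Esum x (insert a (insert b V)) (0 + 1) = Esum x V (0 + 1) + (x a + x b) := by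
      rw [Esum_insert x haV 0, Esum_insert x hbV 0, Esum_zero, Esum_zero]
      ring
    rw [show Esum x (insert a (insert b V)) 1 = Esum x V (0 + 1) + (x a + x b) from e1]
    exact add_mem (hVD _) hs
  | (k + 2) =>
    have e2 : Esum x (insert a (insert b V)) ((k + 1) + 1)
        = Esum x V ((k + 1) + 1) + (x a + x b) * Esum x V (k + 1)
          + (x a * x b) * Esum x V k := by
      rw [Esum_insert x haV (k + 1), Esum_insert x hbV (k + 1), Esum_insert x hbV k]
      ring
    rw [show Esum x (insert a (insert b V)) (k + 2)
        = Esum x V ((k + 1) + 1) + (x a + x b) * Esum x V (k + 1)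
          + (x a * x b) * Esum x V k from e2]
    exact add_mem (add_mem (hVD _) (mul_mem hs (hVD _))) (mul_mem hp (hVD _))

end Esymm

lemma aeval_esymm_eq_Esum (n : ℕ) (k : ℕ) :
    MvPolynomial.aeval (Jt n) (MvPolynomial.esymm (Fin (n - 1)) ℂ k)
      = Esum (Jt n) Finset.univ k := by
  rw [MvPolynomial.esymm, Esum, map_sum]
  refine Finset.sum_congr rfl fun S _ => ?_
  rw [map_prod]
  exact Finset.prod_congr rfl fun i _ => MvPolynomial.aeval_X _ i

lemma esymm_central (n : ℕ) (k : ℕ) :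
    (Tsub n).val (MvPolynomial.aeval (Jt n) (MvPolynomial.esymm (Fin (n - 1)) ℂ k))
      ∈ Subalgebra.center ℂ (MonoidAlgebra ℂ (Equiv.Perm (Fin n))) := by
  apply mem_center_of_commute_of
  apply commute_of_all
  intro c hc
  set s : MonoidAlgebra ℂ (Equiv.Perm (Fin n)) :=
    MonoidAlgebra.of ℂ (Equiv.Perm (Fin n)) (Equiv.swap c ⟨c.1 + 1, hc⟩) with hs
  set D : Subalgebra ℂ (Tsub n) :=
    (Subalgebra.centralizer ℂ {s}).comap (Tsub n).val with hD
  have hmemD : ∀ t : Tsub n, (s * (t : MonoidAlgebra ℂ (Equiv.Perm (Fin n))) = t * s) → t ∈ D := by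
    intro t ht
    rw [hD, Subalgebra.mem_comap]
    rw [Subalgebra.mem_centralizer_iff]
    rintro g hg
    rw [Set.mem_singleton_iff] at hg
    subst hg
    exact ht
  suffices H : MvPolynomial.aeval (Jt n) (MvPolynomial.esymm (Fin (n - 1)) ℂ k) ∈ D by
    rw [hD, Subalgebra.mem_comap, Subalgebra.mem_centralizer_iff] at H
    exact H s rfl
  rw [aeval_esymm_eq_Esum]
  by_cases hc0 : c.1 = 0
  · -- the swap equals J_1 = Jfun 0; it commutes with all Jucys-Murphy elements
    have hn2 : 0 < n - 1 := by omega
    have h1n : 1 < n := by omega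
    have hfil : Finset.univ.filter
          (fun i : Fin n => i < (⟨1, h1n⟩ : Fin n))
        = {(⟨0, by omega⟩ : Fin n)} := by
      ext j
      simp only [Finset.mem_filter, Finset.mem_univ, true_and, Finset.mem_singleton, Fin.lt_def]
      constructor
      · intro hj
        have hj' : j.1 < 1 := hj
        exact Fin.ext (show j.1 = 0 by omega)
      · rintro rfl; exact Nat.zero_lt_one
    have hJone : Jfun n ⟨0, hn2⟩
        = MonoidAlgebra.of ℂ (Equiv.Perm (Fin n))
            (Equiv.swap ⟨0, by omega⟩ ⟨1, h1n⟩) := by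
      have hJ : Jfun n ⟨0, hn2⟩ = jucysMurphy n ⟨1, h1n⟩ := by
        rw [Jfun]
      rw [hJ, jucysMurphy, hfil, Finset.sum_singleton]
    have hswap : s = Jfun n ⟨0, hn2⟩ := by
      rw [hs, hJone]
      congr 2
      · exact Fin.ext hc0
      · exact Fin.ext (show c.1 + 1 = 1 by omega)
    have hall : ∀ i : Fin (n - 1), Jt n i ∈ D := by
      intro i
      apply hmemD
      rw [hswap]
      exact (jucys_commute _ _).eq
    exact Subalgebra.sum_mem _ fun S _ => Subalgebra.prod_mem _ fun i _ => hall i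
  · -- pair case
    have h1 : 1 ≤ c.1 := by omega
    have hclt : c.1 < n - 1 := by omega
    set a : Fin (n - 1) := ⟨c.1 - 1, by omega⟩ with hadef
    set b : Fin (n - 1) := ⟨c.1, hclt⟩ with hbdef
    have hab : a ≠ b := by
      intro h
      have h2 : c.1 - 1 = c.1 := congrArg Fin.val h
      omega
    have hJta : (Jt n a : MonoidAlgebra ℂ (Equiv.Perm (Fin n))) = jucysMurphy n c := by
      show Jfun n a = jucysMurphy n c
      rw [Jfun]
      congr 1
      exact Fin.ext (show c.1 - 1 + 1 = c.1 by omega)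
    have hJtb : (Jt n b : MonoidAlgebra ℂ (Equiv.Perm (Fin n)))
        = jucysMurphy n ⟨c.1 + 1, hc⟩ := by
      show Jfun n b = jucysMurphy n ⟨c.1 + 1, hc⟩
      rw [Jfun]
    refine Esum_mem (Jt n) D (Finset.mem_univ a) (Finset.mem_univ b) hab ?_ ?_ ?_ k
    · intro i _ hia hib
      apply hmemD
      show s * Jfun n i = Jfun n i * s
      rw [Jfun, hs]
      apply swap_comm_other
      · intro h
        have h' : i.1 + 1 = c.1 := h
        apply hia
        exact Fin.ext (show i.1 = c.1 - 1 by omega)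
      · intro h
        have h' : i.1 + 1 = c.1 + 1 := h
        apply hib
        exact Fin.ext (show i.1 = c.1 by omega)
    · apply hmemD
      push_cast
      rw [hJta, hJtb, hs]
      exact swap_comm_sum c hc
    · apply hmemD
      push_cast
      rw [hJta, hJtb, hs]
      exact swap_comm_prod c hc

end JMAux

open JMAux in
/-- Any symmetric polynomial evaluated at the Jucys–Murphy elements `J_2, …, J_n`
lies in the center of the group algebra `ℂ[S_n]`. -/
theorem symmetric_jucysMurphy_mem_center (n : ℕ)
    (p : MvPolynomial (Fin (n - 1)) ℂ) (hp : p.IsSymmetric) :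
    evalAtJucysMurphy n p ∈
      Subalgebra.center ℂ (MonoidAlgebra ℂ (Equiv.Perm (Fin n))) := by
  rw [evalJ_eq]
  obtain ⟨q, hq⟩ := MvPolynomial.esymmAlgHom_surjective (σ := Fin (n - 1)) (R := ℂ)
    (n := n - 1) (by simp) ⟨p, hp⟩
  have hp' : p = MvPolynomial.aeval
      (fun i : Fin (n - 1) => MvPolynomial.esymm (Fin (n - 1)) ℂ (i + 1)) q := by
    have := congrArg Subtype.val hq
    rw [MvPolynomial.esymmAlgHom_apply] at this
    exact this.symm
  have hpadj : p ∈ Algebra.adjoin ℂ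
      (Set.range fun i : Fin (n - 1) => MvPolynomial.esymm (Fin (n - 1)) ℂ (i + 1)) := by
    rw [Algebra.adjoin_range_eq_range_aeval]
    exact ⟨q, hp'.symm⟩
  have hle : Algebra.adjoin ℂ
      (Set.range fun i : Fin (n - 1) => MvPolynomial.esymm (Fin (n - 1)) ℂ (i + 1))
      ≤ (Subalgebra.center ℂ (MonoidAlgebra ℂ (Equiv.Perm (Fin n)))).comap
          (((Tsub n).val).comp (MvPolynomial.aeval (Jt n))) := by
    apply Algebra.adjoin_le
    rintro _ ⟨i, rfl⟩
    rw [SetLike.mem_coe, Subalgebra.mem_comap, AlgHom.comp_apply]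
    exact esymm_central n (i + 1)
  have := hle hpadj
  rw [Subalgebra.mem_comap, AlgHom.comp_apply] at this
  exact this
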